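/- For every odd integer r ≥ 3 there exists a finite simple r-regular graph G whose palette index attains the maximum admissible value, i.e., š(G) = r + 1. -/

import Mathlib

open SimpleGraph

/-- `c` is a proper edge-coloring of `G`: distinct edges sharing a vertex
receive distinct colors. -/
def IsProperEdgeColoring {V : Type*} (G : SimpleGraph V) (c : Sym2 V → ℕ) : Prop :=
  ∀ e₁ ∈ G.edgeSet, ∀ e₂ ∈ G.edgeSet, e₁ ≠ e₂ → (∃ v, v ∈ e₁ ∧ v ∈ e₂) → c e₁ ≠ c e₂

/-- The palette of a vertex `v`: the set of colors of edges incident with `v`. -/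
def palette {V : Type*} (G : SimpleGraph V) (c : Sym2 V → ℕ) (v : V) : Set ℕ :=
  c '' (G.incidenceSet v)

/-- The number of distinct palettes occurring among the vertices. -/
noncomputable def numPalettes {V : Type*} (G : SimpleGraph V) (c : Sym2 V → ℕ) : ℕ :=
  (Set.range (palette G c)).ncard

/-- The palette index of `G`: the minimum number of distinct palettes over all
proper edge-colorings of `G`. -/
noncomputable def paletteIndex {V : Type*} (G : SimpleGraph V) : ℕ :=
  sInf { n | ∃ c, IsProperEdgeColoring G c ∧ numPalettes G c = n }

/-- `G` has a spanning even subgraph without isolated vertices. -/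
def ExistsSpanningEvenNoIsolated {V : Type*} (G : SimpleGraph V) : Prop :=
  ∃ K : SimpleGraph V, K ≤ G ∧ (∀ v, Even (K.neighborSet v).ncard) ∧
    (∀ v, 1 ≤ (K.neighborSet v).ncard)

section Construction
variable (r : ℕ)

abbrev Vtx := Option (Fin r × ZMod (r+2))

def Hadj (p q : ZMod (r+2)) : Prop :=
  p ≠ q ∧ p + q ≠ 0 ∧ ¬(p = 0 ∧ q = 1) ∧ ¬(p = 1 ∧ q = 0)

instance : DecidableRel (Hadj r) := fun _ _ => by unfold Hadj; infer_instance

lemma Hadj_symm {p q : ZMod (r+2)} (h : Hadj r p q) : Hadj r q p := by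
  obtain ⟨h1, h2, h3, h4⟩ := h
  exact ⟨h1.symm, fun hh => h2 (by linear_combination hh), fun ⟨a,b⟩ => h4 ⟨b,a⟩, fun ⟨a,b⟩ => h3 ⟨b,a⟩⟩

def Gr : SimpleGraph (Vtx r) where
  Adj v w :=
    match v, w with
    | none, none => False
    | none, some (_, p) => p = 1
    | some (_, p), none => p = 1
    | some (i, p), some (j, q) => i = j ∧ Hadj r p q
  symm := by
    refine ⟨?_⟩; rintro (_|⟨i,p⟩) (_|⟨j,q⟩) h
    · exact h
    · exact h
    · exact h
    · exact ⟨h.1.symm, Hadj_symm r h.2⟩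
  loopless := by
    refine ⟨?_⟩; rintro (_|⟨i,p⟩) h
    · exact h
    · exact h.2.1 rfl

instance : DecidableRel (Gr r).Adj := fun v w => by
  rcases v with _|⟨i,p⟩ <;> rcases w with _|⟨j,q⟩ <;> unfold Gr <;> dsimp <;> infer_instance

end Construction

section Degrees
variable (r : ℕ) (hr : 3 ≤ r) (hodd : Odd r)

lemma self_add_self_eq_zero (hodd : Odd r) (p : ZMod (r+2)) (h : p + p = 0) : p = 0 := by
  have hcop : Nat.Coprime 2 (r+2) := by
    obtain ⟨k, hk⟩ := hodd
    exact Nat.coprime_two_left.mpr ⟨k+1, by omega⟩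
  have h2 : ((ZMod.unitOfCoprime 2 hcop : (ZMod (r+2))ˣ) : ZMod (r+2)) * p = 0 := by
    rw [ZMod.coe_unitOfCoprime]
    push_cast
    linear_combination h
  exact (Units.mul_right_eq_zero _).mp h2

end Degrees

section Deg
variable (r : ℕ)

lemma card_zmod : Fintype.card (ZMod (r+2)) = r+2 := ZMod.card _

lemma zmod_zero_ne_one (hr : 3 ≤ r) : (0 : ZMod (r+2)) ≠ 1 := by
  intro h
  have h2 := congrArg ZMod.val h
  rw [show (1 : ZMod (r+2)) = ((1:ℕ) : ZMod (r+2)) by push_cast; rfl,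
    ZMod.val_zero, ZMod.val_cast_of_lt (by omega)] at h2
  omega

lemma zmod_neg_one_ne_zero (hr : 3 ≤ r) : (-1 : ZMod (r+2)) ≠ 0 := by
  intro h
  have : (1 : ZMod (r+2)) = 0 := by linear_combination -h
  exact (zmod_zero_ne_one r hr) this.symm

lemma zmod_neg_one_ne_one (hr : 3 ≤ r) (hodd : Odd r) : (-1 : ZMod (r+2)) ≠ 1 := by
  intro h
  have h2 : (1 : ZMod (r+2)) + 1 = 0 := by linear_combination -h
  have := self_add_self_eq_zero r hodd 1 h2
  exact (zmod_zero_ne_one r hr) this.symm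

open Finset in
lemma Hfin_card (hr : 3 ≤ r) (hodd : Odd r) (p : ZMod (r+2)) :
    (univ.filter (Hadj r p)).card = if p = 1 then r - 1 else r := by
  have key : ∀ q : ZMod (r+2), p + q = 0 ↔ q = -p := by
    intro q; constructor <;> intro h <;> linear_combination h
  by_cases hp1 : p = 1
  · subst hp1
    have he : univ.filter (Hadj r (1 : ZMod (r+2))) = univ \ {1, -1, 0} := by
      ext q
      simp only [mem_filter, mem_univ, true_and, mem_sdiff, mem_insert, mem_singleton,
        not_or, ne_eq, Hadj, key, (zmod_zero_ne_one r hr).symm]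
      have : ¬ (1 : ZMod (r+2)) = 0 := fun h => (zmod_zero_ne_one r hr) h.symm
      tauto
    have c3 : ({1, -1, 0} : Finset (ZMod (r+2))).card = 3 := by
      rw [card_insert_of_notMem (by
        simp only [mem_insert, mem_singleton, not_or]
        exact ⟨(zmod_neg_one_ne_one r hr hodd).symm, (zmod_zero_ne_one r hr).symm⟩),
        card_insert_of_notMem (by simpa using zmod_neg_one_ne_zero r hr)]
      simp
    rw [he, card_sdiff_of_subset (by simp), c3, card_univ, card_zmod, if_pos rfl]
    omega
  · by_cases hp0 : p = 0
    · subst hp0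
      have he : univ.filter (Hadj r (0 : ZMod (r+2))) = univ \ {0, 1} := by
        ext q
        simp only [mem_filter, mem_univ, true_and, mem_sdiff, mem_insert, mem_singleton,
          not_or, ne_eq, Hadj, key, neg_zero]
        have : ¬ (0 : ZMod (r+2)) = 1 := zmod_zero_ne_one r hr
        tauto
      have c2 : ({0, 1} : Finset (ZMod (r+2))).card = 2 := by
        rw [card_insert_of_notMem (by simpa using zmod_zero_ne_one r hr)]; simp
      rw [he, card_sdiff_of_subset (by simp), c2, card_univ, card_zmod, if_neg hp1]
      omega
    · have he : univ.filter (Hadj r p) = univ \ {p, -p} := by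
        ext q
        simp only [mem_filter, mem_univ, true_and, mem_sdiff, mem_insert, mem_singleton,
          not_or, ne_eq, Hadj, key]
        tauto
      have hne : p ≠ -p := by
        intro h
        exact hp0 (self_add_self_eq_zero r hodd p (by linear_combination h))
      have c2 : ({p, -p} : Finset (ZMod (r+2))).card = 2 := by
        rw [card_insert_of_notMem (by simpa using hne)]; simp
      rw [he, card_sdiff_of_subset (by simp), c2, card_univ, card_zmod, if_neg hp1]
      omega
open Finset in
lemma nbhd_none : (Gr r).neighborFinset none
    = univ.image (fun i : Fin r => (some (i,1) : Vtx r)) := by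
  ext w; rw [SimpleGraph.mem_neighborFinset]
  rcases w with _|⟨j,q⟩
  · simp [SimpleGraph.mem_neighborFinset, Gr]
  · simp only [SimpleGraph.mem_neighborFinset, Gr, mem_image, mem_univ, true_and,
      Option.some.injEq, Prod.mk.injEq]
    constructor
    · intro h; exact ⟨j, rfl, h.symm⟩
    · rintro ⟨a, rfl, h2⟩; exact h2.symm

open Finset in
lemma nbhd_some (i : Fin r) (p : ZMod (r+2)) : (Gr r).neighborFinset (some (i,p)) =
    ((univ.filter (Hadj r p)).image (fun q => (some (i,q) : Vtx r))) ∪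
      (if p = 1 then {none} else ∅) := by
  ext w; rw [SimpleGraph.mem_neighborFinset]
  rcases w with _|⟨j,q⟩
  · by_cases hp : p = 1 <;>
      simp [SimpleGraph.mem_neighborFinset, Gr, hp]
  · simp only [SimpleGraph.mem_neighborFinset, Gr, mem_union, mem_image, mem_filter,
      mem_univ, true_and, Option.some.injEq, Prod.mk.injEq]
    constructor
    · rintro ⟨h1, h2⟩
      left; exact ⟨q, h2, h1, rfl⟩
    · rintro (⟨a, ha, h1, h2⟩ | hnone)
      · subst h2; exact ⟨h1, ha⟩
      · exfalso
        by_cases hp : p = 1 <;> simp [hp] at hnone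

open Finset in
lemma Gr_degree (hr : 3 ≤ r) (hodd : Odd r) (v : Vtx r) : (Gr r).degree v = r := by
  rcases v with _|⟨i,p⟩
  · simp only [SimpleGraph.degree]
    rw [nbhd_none, card_image_of_injective _ (by intro a b h; simpa using h)]
    simp
  · simp only [SimpleGraph.degree]
    rw [nbhd_some, card_union_of_disjoint (by
      by_cases hp : p = 1 <;> simp [hp, Finset.disjoint_left])]
    rw [card_image_of_injective _ (by intro a b h; simpa using h)]
    rw [Hfin_card r hr hodd p]
    by_cases hp : p = 1 <;> simp [hp] <;> omega

lemma Gr_regular (hr : 3 ≤ r) (hodd : Odd r) (v : Vtx r) :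
    ((Gr r).neighborSet v).ncard = r := by
  rw [Set.ncard_eq_toFinset_card']
  exact Gr_degree r hr hodd v
section Coloring
variable (r : ℕ)

def colf : Vtx r → Vtx r → ℕ
  | some (i,p), some (j,q) => ((p+q).val - 1 + min i.val j.val) % (r+1)
  | none, some (i,_) => i.val
  | some (i,_), none => i.val
  | none, none => 0

lemma colf_symm (v w : Vtx r) : colf r v w = colf r w v := by
  rcases v with _|⟨i,p⟩ <;> rcases w with _|⟨j,q⟩ <;> simp [colf, add_comm, min_comm]

def col : Sym2 (Vtx r) → ℕ := Sym2.lift ⟨colf r, colf_symm r⟩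

@[simp] lemma col_mk (v w : Vtx r) : col r s(v,w) = colf r v w := rfl

lemma mod_small_cases (x n : ℕ) (h : x < 2*n) : x % n = x ∨ (n ≤ x ∧ x % n = x - n) := by
  rcases lt_or_ge x n with h1 | h1
  · left; exact Nat.mod_eq_of_lt h1
  · right
    refine ⟨h1, ?_⟩
    rw [Nat.mod_eq_sub_mod h1]
    exact Nat.mod_eq_of_lt (by omega)

lemma val_one' (hr : 3 ≤ r) : (1 : ZMod (r+2)).val = 1 := by
  rw [show (1 : ZMod (r+2)) = ((1:ℕ) : ZMod (r+2)) by push_cast; rfl,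
    ZMod.val_cast_of_lt (by omega)]

lemma val_two' (hr : 3 ≤ r) : (2 : ZMod (r+2)).val = 2 := by
  rw [show (2 : ZMod (r+2)) = ((2:ℕ) : ZMod (r+2)) by push_cast; rfl,
    ZMod.val_cast_of_lt (by omega)]

/-- class value of a gadget edge -/
lemma cls_bounds (hr : 3 ≤ r) {p q : ZMod (r+2)} (h : Hadj r p q) :
    1 ≤ (p+q).val ∧ (p+q).val ≤ r+1 := by
  have h2 : (p+q).val < r+2 := ZMod.val_lt _
  have h3 : (p+q).val ≠ 0 := by
    intro h0
    exact h.2.1 ((ZMod.val_eq_zero _).mp h0)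
  omega

lemma cls_bounds_at_one (hr : 3 ≤ r) {q : ZMod (r+2)} (h : Hadj r 1 q) :
    3 ≤ (1+q).val ∧ (1+q).val ≤ r+1 := by
  obtain ⟨hb1, hb2⟩ := cls_bounds r hr h
  have h2 : (1+q).val ≠ 1 := by
    intro h1
    have : (1 + q : ZMod (r+2)) = 1 := by
      have := congrArg (Nat.cast : ℕ → ZMod (r+2)) h1
      rwa [ZMod.natCast_val, ZMod.cast_id, Nat.cast_one] at this
    exact h.2.2.2 ⟨rfl, by linear_combination this⟩
  have h3 : (1+q).val ≠ 2 := by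
    intro h1
    have : (1 + q : ZMod (r+2)) = 2 := by
      have := congrArg (Nat.cast : ℕ → ZMod (r+2)) h1
      rwa [ZMod.natCast_val, ZMod.cast_id, Nat.cast_two] at this
    exact h.1 (by linear_combination -this)
  omega

lemma mod_ne_aux (n : ℕ) {x i : ℕ} (hx : 3 ≤ x) (hx2 : x ≤ n) (hi : i < n - 1) :
    i ≠ (x - 1 + i) % n := by
  obtain ⟨a, rfl⟩ : ∃ a, x = a + 3 := ⟨x - 3, by omega⟩
  intro h
  rcases mod_small_cases (a + 3 - 1 + i) n (by omega) with hc | hc <;> omega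

lemma mod_inj_aux (n : ℕ) {x y i : ℕ} (hx : 1 ≤ x) (hx2 : x ≤ n) (hy : 1 ≤ y) (hy2 : y ≤ n)
    (hi : i < n) (h : (x - 1 + i) % n = (y - 1 + i) % n) : x = y := by
  obtain ⟨a, rfl⟩ : ∃ a, x = a + 1 := ⟨x - 1, by omega⟩
  obtain ⟨b, rfl⟩ : ∃ b, y = b + 1 := ⟨y - 1, by omega⟩
  simp only [Nat.add_sub_cancel] at h
  rcases mod_small_cases (a + i) n (by omega) with hc | hc <;>
    rcases mod_small_cases (b + i) n (by omega) with hc' | hc' <;> omega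

lemma col_key (hr : 3 ≤ r) (u a b : Vtx r) (ha : (Gr r).Adj u a) (hb : (Gr r).Adj u b)
    (hab : a ≠ b) : col r s(u,a) ≠ col r s(u,b) := by
  rcases u with _|⟨i,p⟩
  · -- hub: a, b are bridge endpoints
    rcases a with _|⟨j,q⟩; · exact ha.elim
    rcases b with _|⟨k,q'⟩; · exact hb.elim
    have hq : q = 1 := ha
    have hq' : q' = 1 := hb
    subst hq hq'
    simp only [col_mk, colf, ne_eq]
    intro h
    exact hab (by rw [Fin.val_injective h])
  · rcases a with _|⟨j,q⟩
    · -- a = bridge at x_i, so p = 1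
      have hp : p = 1 := ha
      rcases b with _|⟨k,q'⟩; · exact absurd rfl hab
      obtain ⟨hij, hH⟩ := hb
      subst hij hp
      simp only [col_mk, colf, ne_eq, min_self]
      obtain ⟨h3, h4⟩ := cls_bounds_at_one r hr hH
      exact mod_ne_aux (r+1) h3 (by omega) i.isLt
    · rcases b with _|⟨k,q'⟩
      · -- b = bridge, symmetric
        have hp : p = 1 := hb
        obtain ⟨hij, hH⟩ := ha
        subst hij hp
        simp only [col_mk, colf, ne_eq, min_self]
        obtain ⟨h3, h4⟩ := cls_bounds_at_one r hr hH
        exact fun h => mod_ne_aux (r+1) h3 (by omega) i.isLt h.symm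
      · -- two gadget edges
        obtain ⟨hij, hH⟩ := ha
        obtain ⟨hik, hH'⟩ := hb
        subst hij hik
        have hqq : q ≠ q' := by
          intro h; exact hab (by rw [h])
        simp only [col_mk, colf, ne_eq, min_self]
        intro h
        obtain ⟨c1, c2⟩ := cls_bounds r hr hH
        obtain ⟨c1', c2'⟩ := cls_bounds r hr hH'
        have hi : i.val < r := i.isLt
        have hval : (p+q).val = (p+q').val :=
          mod_inj_aux (r+1) c1 (by omega) c1' (by omega) (by omega) h
        apply hqq
        have : (p + q : ZMod (r+2)) = p + q' := ZMod.val_injective _ hval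
        linear_combination this

lemma col_proper (hr : 3 ≤ r) : IsProperEdgeColoring (Gr r) (col r) := by
  rintro e₁ he₁ e₂ he₂ hne ⟨v, hv1, hv2⟩
  obtain ⟨a, rfl⟩ := Sym2.mem_iff_exists.mp hv1
  obtain ⟨b, rfl⟩ := Sym2.mem_iff_exists.mp hv2
  rw [SimpleGraph.mem_edgeSet] at he₁ he₂
  exact col_key r hr v a b he₁ he₂ (fun h => hne (by rw [h]))

end Coloring
section Palettes

lemma palette_injOn {V : Type*} (G : SimpleGraph V) (c : Sym2 V → ℕ)
    (hc : IsProperEdgeColoring G c) (v : V) : Set.InjOn c (G.incidenceSet v) := by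
  intro e₁ he₁ e₂ he₂ h
  by_contra hne
  exact hc e₁ he₁.1 e₂ he₂.1 hne ⟨v, he₁.2, he₂.2⟩ h

lemma palette_ncard {V : Type*} [Fintype V] [DecidableEq V] (G : SimpleGraph V)
    [DecidableRel G.Adj] (c : Sym2 V → ℕ) (hc : IsProperEdgeColoring G c) (v : V) :
    (palette G c v).ncard = G.degree v := by
  rw [palette, Set.ncard_image_of_injOn (palette_injOn G c hc v),
    Set.ncard_eq_toFinset_card', Set.toFinset_card]
  exact G.card_incidenceSet_eq_degree v

lemma col_lt (r : ℕ) (e : Sym2 (Vtx r)) (he : e ∈ (Gr r).edgeSet) : col r e < r + 1 := by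
  induction e with
  | _ a b =>
    rw [SimpleGraph.mem_edgeSet] at he
    rcases a with _|⟨i,p⟩ <;> rcases b with _|⟨j,q⟩
    · exact he.elim
    · exact lt_of_lt_of_le j.isLt (by omega)
    · exact lt_of_lt_of_le i.isLt (by omega)
    · exact Nat.mod_lt _ (by omega)

lemma palette_subset_missing (P C : Set ℕ) (hfin : C.Finite) (hsub : P ⊆ C)
    (hcard : P.ncard + 1 = C.ncard) : ∃ t ∈ C, P = C \ {t} := by
  have hd : (C \ P).ncard = 1 := by
    rw [Set.ncard_diff hsub (hfin.subset hsub)]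
    omega
  obtain ⟨t, ht⟩ := Set.ncard_eq_one.mp hd
  refine ⟨t, ?_, ?_⟩
  · have : t ∈ C \ P := ht ▸ rfl
    exact this.1
  · rw [← ht, Set.diff_diff_cancel_left hsub]

lemma numPalettes_col_le (r : ℕ) (hr : 3 ≤ r) (hodd : Odd r) :
    numPalettes (Gr r) (col r) ≤ r + 1 := by
  classical
  set C : Set ℕ := ↑(Finset.range (r+1)) with hC
  have hCfin : C.Finite := (Finset.range (r+1)).finite_toSet
  have hCcard : C.ncard = r + 1 := by rw [hC, Set.ncard_coe_finset, Finset.card_range]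
  have hsub : Set.range (palette (Gr r) (col r)) ⊆ (fun t => C \ {t}) '' C := by
    rintro P ⟨v, rfl⟩
    have hPsub : palette (Gr r) (col r) v ⊆ C := by
      rintro t ⟨e, he, rfl⟩
      simp only [hC, Finset.coe_range, Set.mem_Iio]
      exact col_lt r e he.1
    have hPcard : (palette (Gr r) (col r) v).ncard = r := by
      rw [palette_ncard _ _ (col_proper r hr) v, Gr_degree r hr hodd]
    obtain ⟨t, htC, hPt⟩ := palette_subset_missing (palette (Gr r) (col r) v) C hCfin hPsub (by omega)
    exact ⟨t, htC, hPt.symm⟩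
  calc numPalettes (Gr r) (col r) ≤ ((fun t => C \ {t}) '' C).ncard :=
        Set.ncard_le_ncard hsub (hCfin.image _)
    _ ≤ C.ncard := Set.ncard_image_le hCfin
    _ = r + 1 := hCcard

end Palettes
section LowerBound
open Finset

variable (r : ℕ)

/-- the vertex set of gadget `i` -/
def Vi (i : Fin r) : Finset (Vtx r) := Finset.univ.image (fun p : ZMod (r+2) => some (i,p))

def bridge (i : Fin r) : Sym2 (Vtx r) := s(none, some (i,1))

lemma bridge_mem (i : Fin r) : bridge r i ∈ (Gr r).edgeSet := by
  rw [bridge, SimpleGraph.mem_edgeSet]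
  show (1 : ZMod (r+2)) = 1
  rfl

lemma Vi_card (i : Fin r) : (Vi r i).card = r + 2 := by
  rw [Vi, card_image_of_injective _ (by intro a b h; simpa using h)]
  simp [card_zmod]

lemma mem_Vi {i : Fin r} {v : Vtx r} : v ∈ Vi r i ↔ ∃ p, v = some (i,p) := by
  constructor
  · intro h
    obtain ⟨p, _, hp⟩ := Finset.mem_image.mp h
    exact ⟨p, hp.symm⟩
  · rintro ⟨p, rfl⟩
    exact Finset.mem_image.mpr ⟨p, Finset.mem_univ _, rfl⟩

lemma bridge_eq_iff (i k : Fin r) : bridge r i = s((none : Vtx r), some (k,1)) ↔ k = i := by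
  rw [bridge, Sym2.eq_iff]
  constructor
  · rintro (⟨-, h⟩ | ⟨h, -⟩)
    · exact (congrArg Prod.fst (Option.some_injective _ h)).symm
    · simp at h
  · rintro rfl
    exact Or.inl ⟨rfl, rfl⟩

open scoped Classical in
lemma filter_mem_bridge (i k : Fin r) :
    (Vi r i).filter (fun v => v ∈ s((none : Vtx r), some (k,1)))
      = if k = i then {some (k,1)} else ∅ := by
  ext v
  by_cases hk : k = i
  · subst hk
    rw [if_pos rfl]
    simp only [Finset.mem_filter, Finset.mem_singleton, Sym2.mem_iff]
    constructor
    · rintro ⟨hv, (rfl | rfl)⟩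
      · obtain ⟨p, hp⟩ := (mem_Vi r).mp hv
        exact absurd hp (by simp)
      · rfl
    · rintro rfl
      exact ⟨(mem_Vi r).mpr ⟨1, rfl⟩, Or.inr rfl⟩
  · rw [if_neg hk]
    simp only [Finset.mem_filter, Finset.notMem_empty, iff_false, not_and, Sym2.mem_iff]
    intro hv
    obtain ⟨p, rfl⟩ := (mem_Vi r).mp hv
    rintro (h | h)
    · simp at h
    · exact hk (congrArg Prod.fst (Option.some_injective _ h)).symm

open scoped Classical in
lemma filter_mem_gadget (i j : Fin r) (p q : ZMod (r+2)) :
    (Vi r i).filter (fun v => v ∈ s((some (j,p) : Vtx r), some (j,q)))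
      = if j = i then ({some (j,p), some (j,q)} : Finset (Vtx r)) else ∅ := by
  ext v
  by_cases hj : j = i
  · subst hj
    rw [if_pos rfl]
    simp only [Finset.mem_filter, Finset.mem_insert, Finset.mem_singleton, Sym2.mem_iff]
    constructor
    · rintro ⟨hv, h⟩; exact h
    · rintro (rfl | rfl)
      · exact ⟨(mem_Vi r).mpr ⟨p, rfl⟩, Or.inl rfl⟩
      · exact ⟨(mem_Vi r).mpr ⟨q, rfl⟩, Or.inr rfl⟩
  · rw [if_neg hj]
    simp only [Finset.mem_filter, Finset.notMem_empty, iff_false, not_and, Sym2.mem_iff]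
    intro hv
    obtain ⟨p', rfl⟩ := (mem_Vi r).mp hv
    rintro (h | h) <;>
      exact hj (congrArg Prod.fst (Option.some_injective _ h)).symm

open scoped Classical in
lemma gadget_parity (c : Sym2 (Vtx r) → ℕ) (hc : IsProperEdgeColoring (Gr r) c)
    (i : Fin r) (t : ℕ) :
    ((((Vi r i).filter (fun v => t ∈ palette (Gr r) c v)).card : ZMod 2))
      = if t = c (bridge r i) then 1 else 0 := by
  set Et : Finset (Sym2 (Vtx r)) :=
    Finset.univ.filter (fun e => e ∈ (Gr r).edgeSet ∧ c e = t) with hEt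
  have hmemEt : ∀ e, e ∈ Et ↔ e ∈ (Gr r).edgeSet ∧ c e = t := by
    intro e; simp [hEt]
  have hcover : (Vi r i).filter (fun v => t ∈ palette (Gr r) c v)
      = Et.biUnion (fun e => (Vi r i).filter (fun v => v ∈ e)) := by
    ext v
    simp only [Finset.mem_filter, Finset.mem_biUnion]
    constructor
    · rintro ⟨hv, ⟨e, he, hce⟩⟩
      exact ⟨e, (hmemEt e).mpr ⟨he.1, hce⟩, hv, he.2⟩
    · rintro ⟨e, he, hvv, hve⟩
      obtain ⟨hee, hct⟩ := (hmemEt e).mp he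
      exact ⟨hvv, ⟨e, ⟨hee, hve⟩, hct⟩⟩
  have hdisj : ∀ e₁ ∈ Et, ∀ e₂ ∈ Et, e₁ ≠ e₂ →
      Disjoint ((Vi r i).filter (fun v => v ∈ e₁)) ((Vi r i).filter (fun v => v ∈ e₂)) := by
    intro e₁ he₁ e₂ he₂ hne
    rw [Finset.disjoint_left]
    rintro v hv1 hv2
    obtain ⟨h1, hm1⟩ := Finset.mem_filter.mp hv1
    obtain ⟨h2, hm2⟩ := Finset.mem_filter.mp hv2
    obtain ⟨he1, hc1⟩ := (hmemEt e₁).mp he₁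
    obtain ⟨he2, hc2⟩ := (hmemEt e₂).mp he₂
    exact hc e₁ he1 e₂ he2 hne ⟨v, hm1, hm2⟩ (hc1.trans hc2.symm)
  rw [hcover, Finset.card_biUnion hdisj]
  push_cast
  have hterm : ∀ e ∈ Et, (((Vi r i).filter (fun v => v ∈ e)).card : ZMod 2)
      = if bridge r i = e then 1 else 0 := by
    intro e he
    obtain ⟨hee, -⟩ := (hmemEt e).mp he
    induction e with
    | _ a b =>
      rw [SimpleGraph.mem_edgeSet] at hee
      rcases a with _|⟨j,p⟩ <;> rcases b with _|⟨k,q⟩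
      · exact hee.elim
      · have hq : q = 1 := hee
        subst hq
        rw [filter_mem_bridge]
        by_cases hk : k = i
        · rw [if_pos hk, if_pos ((bridge_eq_iff r i k).mpr hk)]
          simp
        · rw [if_neg hk, if_neg (fun h => hk ((bridge_eq_iff r i k).mp h))]
          simp
      · have hp : p = 1 := hee
        subst hp
        have hswap : s((some (j,1) : Vtx r), none) = s((none : Vtx r), some (j,1)) :=
          Sym2.eq_swap
        rw [hswap, filter_mem_bridge]
        by_cases hj : j = i
        · rw [if_pos hj, if_pos ((bridge_eq_iff r i j).mpr hj)]
          simp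
        · rw [if_neg hj, if_neg (fun h => hj ((bridge_eq_iff r i j).mp h))]
          simp
      · obtain ⟨hjk, hH⟩ := hee
        subst hjk
        rw [filter_mem_gadget]
        have hnb : bridge r i ≠ s((some (j,p) : Vtx r), some (j,q)) := by
          rw [bridge]
          intro h
          rw [Sym2.eq_iff] at h
          rcases h with ⟨h, -⟩ | ⟨h, -⟩ <;> simp at h
        rw [if_neg hnb]
        by_cases hj : j = i
        · rw [if_pos hj, Finset.card_insert_of_notMem (by simp [hH.1]),
            Finset.card_singleton]
          decide
        · rw [if_neg hj]
          simp
  rw [Finset.sum_congr rfl hterm, Finset.sum_ite_eq]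
  by_cases hb : bridge r i ∈ Et
  · rw [if_pos hb, if_pos ((hmemEt _).mp hb).2.symm]
  · rw [if_neg hb, if_neg (by
      intro h
      exact hb ((hmemEt _).mpr ⟨bridge_mem r i, h.symm⟩))]

end LowerBound
section Finale
open Finset Module

open scoped Classical in
noncomputable def chiv (S : Set ℕ) : ℕ → ZMod 2 := fun t => if t ∈ S then 1 else 0

open scoped Classical in
noncomputable def deltav (a : ℕ) : ℕ → ZMod 2 := fun t => if t = a then 1 else 0

variable (r : ℕ)

open scoped Classical in
lemma lower_bound (hr : 3 ≤ r) (hodd : Odd r) (c : Sym2 (Vtx r) → ℕ)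
    (hc : IsProperEdgeColoring (Gr r) c) : r + 1 ≤ numPalettes (Gr r) c := by
  by_contra hk'
  push_neg at hk'
  set k := numPalettes (Gr r) c with hkdef
  have hk : k ≤ r := by omega
  set b : Fin r → ℕ := fun i => c (bridge r i) with hbdef
  have hb_inj : Function.Injective b := by
    intro i j h
    by_contra hne
    have hbne : bridge r i ≠ bridge r j := by
      intro hbb
      exact hne (((bridge_eq_iff r i j).mp hbb).symm)
    exact hc (bridge r i) (bridge_mem r i) (bridge r j) (bridge_mem r j) hbne
      ⟨none, by rw [bridge]; exact Sym2.mem_mk_left _ _, by rw [bridge]; exact Sym2.mem_mk_left _ _⟩ h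
  have hMadd : ∀ x : ℕ → ZMod 2, x + x = 0 := fun x => by
    funext t; exact CharTwo.add_self_eq_zero _
  set χ₀ : ℕ → ZMod 2 := chiv (palette (Gr r) c none) with hχ₀def
  -- the per-gadget sum identity
  have hsum : ∀ i : Fin r, (∑ v ∈ Vi r i, chiv (palette (Gr r) c v)) = deltav (b i) := by
    intro i
    funext t
    rw [Finset.sum_apply]
    have h1 : (∑ v ∈ Vi r i, chiv (palette (Gr r) c v) t)
        = (((Vi r i).filter (fun v => t ∈ palette (Gr r) c v)).card : ZMod 2) := by
      rw [← Finset.sum_boole]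
      apply Finset.sum_congr rfl
      intro v _
      simp [chiv]
    rw [h1, gadget_parity r c hc i t]
    simp [deltav, hbdef]
  -- span of palette differences
  set Sgen : Set (ℕ → ZMod 2) :=
    ((fun P => chiv P + χ₀) '' Set.range (palette (Gr r) c)) \ {0} with hSdef
  have hSfin : Sgen.Finite := ((Set.finite_range _).image _).diff
  set W := Submodule.span (ZMod 2) Sgen with hWdef
  haveI : FiniteDimensional (ZMod 2) W := FiniteDimensional.span_of_finite _ hSfin
  have hwW : ∀ v, chiv (palette (Gr r) c v) + χ₀ ∈ W := by
    intro v
    by_cases h0 : chiv (palette (Gr r) c v) + χ₀ = 0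
    · rw [h0]; exact W.zero_mem
    · exact Submodule.subset_span ⟨⟨palette (Gr r) c v, ⟨v, rfl⟩, rfl⟩, h0⟩
  have hk1 : 1 ≤ k := by
    rw [hkdef, numPalettes]
    have : (Set.range (palette (Gr r) c)).Nonempty := ⟨_, ⟨none, rfl⟩⟩
    exact Set.ncard_pos (Set.finite_range _) |>.mpr this
  have hfrW : finrank (ZMod 2) W ≤ k - 1 := by
    have h0mem : (0 : ℕ → ZMod 2) ∈ ((fun P => chiv P + χ₀) '' Set.range (palette (Gr r) c)) :=
      ⟨palette (Gr r) c none, ⟨none, rfl⟩, hMadd _⟩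
    have himg : (((fun P => chiv P + χ₀) '' Set.range (palette (Gr r) c))).ncard ≤ k :=
      Set.ncard_image_le (Set.finite_range _)
    have hdiff := Set.ncard_diff_singleton_of_mem h0mem
    have hScard : Sgen.ncard ≤ k - 1 := by
      rw [hSdef, hdiff]
      omega
    haveI := hSfin.fintype
    calc finrank (ZMod 2) W ≤ Sgen.toFinset.card := by rw [hWdef]; exact finrank_span_le_card Sgen
      _ = Sgen.ncard := (Set.ncard_eq_toFinset_card' _).symm
      _ ≤ k - 1 := hScard
  -- the delta vectors lie in the coset
  have hδW : ∀ i : Fin r, deltav (b i) + χ₀ ∈ W := by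
    intro i
    rw [← hsum i]
    have hs : (∑ v ∈ Vi r i, chiv (palette (Gr r) c v)) + χ₀
        = ∑ v ∈ Vi r i, (chiv (palette (Gr r) c v) + χ₀) := by
      rw [Finset.sum_add_distrib, Finset.sum_const, Vi_card]
      congr 1
      rw [← Nat.cast_smul_eq_nsmul (ZMod 2)]
      have hone : ((r+2 : ℕ) : ZMod 2) = 1 := by
        obtain ⟨m, rfl⟩ := hodd
        push_cast
        rw [show ((2:ZMod 2)) = 0 by decide]
        ring
      rw [hone, one_smul]
    rw [hs]
    exact W.sum_mem (fun v _ => hwW v)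
  -- independent family
  have hz : 0 < r := by omega
  set z : Fin r := ⟨0, hz⟩ with hzdef
  set idx : Fin (r-1) → Fin r := fun j => ⟨j.val + 1, by omega⟩ with hidxdef
  set fam : Fin (r-1) → (ℕ → ZMod 2) := fun j => deltav (b (idx j)) + deltav (b z) with hfamdef
  have hfamW : ∀ j, fam j ∈ W := by
    intro j
    have he : fam j = (deltav (b (idx j)) + χ₀) + (deltav (b z) + χ₀) := by
      rw [add_add_add_comm, hMadd, add_zero]
    rw [he]
    exact W.add_mem (hδW (idx j)) (hδW z)
  have hli : LinearIndependent (ZMod 2) fam := by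
    rw [Fintype.linearIndependent_iff]
    intro g hg j
    have hev := congrFun hg (b (idx j))
    rw [Finset.sum_apply] at hev
    have hterm : ∀ j' ∈ Finset.univ, g j' • fam j' (b (idx j))
        = if j = j' then g j' else 0 := by
      intro j' _
      rw [hfamdef]
      simp only [Pi.smul_apply, Pi.add_apply, deltav]
      have hz_ne : ¬ (b (idx j) = b z) := by
        intro h
        have := hb_inj h
        rw [hidxdef, hzdef] at this
        exact absurd (congrArg Fin.val this) (by simp)
      by_cases hjj : j = j'
      · subst hjj
        rw [if_pos rfl, if_pos rfl, if_neg hz_ne, add_zero]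
        simp
      · rw [if_neg hjj, if_neg (by
          intro h
          have := hb_inj h
          apply hjj
          rw [hidxdef] at this
          exact Fin.ext (by have h3 := congrArg Fin.val this; simp at h3; omega)), if_neg hz_ne, add_zero]
        simp
    simp only [Pi.smul_apply, Pi.zero_apply] at hev
    rw [Finset.sum_congr rfl hterm, Finset.sum_ite_eq, if_pos (Finset.mem_univ j)] at hev
    exact hev
  have hfr2 : finrank (ZMod 2) (Submodule.span (ZMod 2) (Set.range fam)) = r - 1 := by
    rw [finrank_span_eq_card hli, Fintype.card_fin]
  have hle : Submodule.span (ZMod 2) (Set.range fam) ≤ W := by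
    rw [Submodule.span_le]
    rintro x ⟨j, rfl⟩
    exact hfamW j
  have hfr3 : r - 1 ≤ finrank (ZMod 2) W := hfr2 ▸ Submodule.finrank_mono hle
  have heq : Submodule.span (ZMod 2) (Set.range fam) = W :=
    Submodule.eq_of_le_of_finrank_le hle (by omega)
  -- vanishing outside B
  set B : Set ℕ := Set.range b with hBdef
  set Z : Submodule (ZMod 2) (ℕ → ZMod 2) := {
    carrier := {x | ∀ t, t ∉ B → x t = 0}
    add_mem' := fun hx hy t ht => by
      rw [Pi.add_apply, hx t ht, hy t ht, add_zero]
    zero_mem' := fun t ht => rfl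
    smul_mem' := fun a x hx t ht => by
      rw [Pi.smul_apply, hx t ht, smul_zero] } with hZdef
  have hWZ : W ≤ Z := by
    rw [← heq, Submodule.span_le]
    rintro x ⟨j, rfl⟩
    intro t ht
    rw [hfamdef]
    show deltav (b (idx j)) t + deltav (b z) t = 0
    rw [show deltav (b (idx j)) t = 0 from if_neg (fun h => ht ⟨idx j, h.symm⟩),
      show deltav (b z) t = 0 from if_neg (fun h => ht ⟨z, h.symm⟩), add_zero]
  have hχ₀van : ∀ t, t ∉ B → χ₀ t = 0 := by
    intro t ht
    have h1 := hWZ (hδW z) t ht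
    have h2 : deltav (b z) t = 0 := if_neg (fun h => ht ⟨z, h.symm⟩)
    rw [Pi.add_apply, h2, zero_add] at h1
    exact h1
  have hpal : ∀ v : Vtx r, palette (Gr r) c v ⊆ B := by
    intro v t htp
    by_contra ht
    have h1 := hWZ (hwW v) t ht
    rw [Pi.add_apply, hχ₀van t ht, add_zero] at h1
    rw [show chiv (palette (Gr r) c v) t = 1 from if_pos htp] at h1
    exact one_ne_zero h1
  have hBfin : B.Finite := Set.finite_range b
  have hBcard : B.ncard = r := by
    have hBapp : B = ↑(Finset.univ.image b) := by
      ext t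
      simp [hBdef]
    rw [hBapp, Set.ncard_coe_finset, Finset.card_image_of_injective _ hb_inj,
      Finset.card_univ, Fintype.card_fin]
  have hpalcard : ∀ v : Vtx r, (palette (Gr r) c v).ncard = r := fun v => by
    rw [palette_ncard _ _ hc v, Gr_degree r hr hodd]
  have hpal_eq : ∀ v : Vtx r, palette (Gr r) c v = B := fun v =>
    Set.eq_of_subset_of_ncard_le (hpal v) (by rw [hBcard, hpalcard]) hBfin
  have hrange : Set.range (palette (Gr r) c) = {B} := by
    ext P
    constructor
    · rintro ⟨v, rfl⟩
      exact hpal_eq v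
    · rintro rfl
      exact ⟨none, hpal_eq none⟩
  have hk_eq : k = 1 := by
    rw [hkdef, numPalettes, hrange, Set.ncard_singleton]
  omega

end Finale
section Transfer
variable {V V' : Type*} (f : V ≃ V') (G : SimpleGraph V)

lemma edge_comap (e' : Sym2 V') :
    e' ∈ (G.comap (f.symm : V' → V)).edgeSet ↔ Sym2.map f.symm e' ∈ G.edgeSet := by
  induction e' with
  | _ x y => simp [SimpleGraph.mem_edgeSet]

lemma map_symm_map (e : Sym2 V) : Sym2.map (f.symm : V' → V) (Sym2.map (f : V → V') e) = e := by
  rw [Sym2.map_map]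
  have : ((f.symm : V' → V) ∘ (f : V → V')) = id := by
    funext x; simp
  rw [this, Sym2.map_id]
  rfl

lemma map_map_symm (e' : Sym2 V') :
    Sym2.map (f : V → V') (Sym2.map (f.symm : V' → V) e') = e' := by
  rw [Sym2.map_map]
  have : ((f : V → V') ∘ (f.symm : V' → V)) = id := by
    funext x; simp
  rw [this, Sym2.map_id]
  rfl

lemma proper_comap (c : Sym2 V → ℕ) (hc : IsProperEdgeColoring G c) :
    IsProperEdgeColoring (G.comap (f.symm : V' → V)) (c ∘ Sym2.map f.symm) := by
  rintro e₁ he₁ e₂ he₂ hne ⟨v, hv1, hv2⟩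
  apply hc _ ((edge_comap f G e₁).mp he₁) _ ((edge_comap f G e₂).mp he₂)
  · intro h
    apply hne
    have h2 := congrArg (Sym2.map (f : V → V')) h
    rwa [map_map_symm, map_map_symm] at h2
  · exact ⟨f.symm v, Sym2.mem_map.mpr ⟨v, hv1, rfl⟩, Sym2.mem_map.mpr ⟨v, hv2, rfl⟩⟩

lemma incidence_comap (x : V') :
    Sym2.map (f.symm : V' → V) '' ((G.comap (f.symm : V' → V)).incidenceSet x)
      = G.incidenceSet (f.symm x) := by
  ext e
  constructor
  · rintro ⟨e', ⟨he', hx⟩, rfl⟩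
    exact ⟨(edge_comap f G e').mp he', Sym2.mem_map.mpr ⟨x, hx, rfl⟩⟩
  · rintro ⟨he, hx⟩
    refine ⟨Sym2.map (f : V → V') e, ⟨?_, ?_⟩, map_symm_map f e⟩
    · rw [edge_comap, map_symm_map]
      exact he
    · have : (f : V → V') (f.symm x) ∈ Sym2.map (f : V → V') e :=
        Sym2.mem_map.mpr ⟨f.symm x, hx, rfl⟩
      simpa using this
  
lemma palette_comap (c : Sym2 V → ℕ) (x : V') :
    palette (G.comap (f.symm : V' → V)) (c ∘ Sym2.map f.symm) x = palette G c (f.symm x) := by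
  rw [palette, palette, Set.image_comp, incidence_comap]

lemma numPalettes_comap (c : Sym2 V → ℕ) :
    numPalettes (G.comap (f.symm : V' → V)) (c ∘ Sym2.map f.symm) = numPalettes G c := by
  rw [numPalettes, numPalettes]
  congr 1
  ext P
  constructor
  · rintro ⟨x, rfl⟩
    exact ⟨f.symm x, (palette_comap f G c x).symm⟩
  · rintro ⟨v, rfl⟩
    refine ⟨f v, ?_⟩
    rw [palette_comap]
    simp

lemma paletteIndex_comap : paletteIndex (G.comap (f.symm : V' → V)) = paletteIndex G := by
  rw [paletteIndex, paletteIndex]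
  congr 1
  ext n
  constructor
  · rintro ⟨c', hc', rfl⟩
    have hGG : (G.comap (f.symm : V' → V)).comap ((f.symm.symm : V → V')) = G := by
      ext x y
      simp [SimpleGraph.comap]
    have hp := proper_comap f.symm (G.comap (f.symm : V' → V)) c' hc'
    have hnp := numPalettes_comap f.symm (G.comap (f.symm : V' → V)) c'
    rw [hGG] at hp hnp
    exact ⟨_, hp, hnp⟩
  · rintro ⟨c, hc, rfl⟩
    exact ⟨_, proper_comap f G c hc, numPalettes_comap f G c⟩

end Transfer

theorem exists_odd_regular_max_palette_index (r : ℕ) (hodd : Odd r) (hr : 3 ≤ r) :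
    ∃ (n : ℕ) (G : SimpleGraph (Fin n)),
      (∀ v, (G.neighborSet v).ncard = r) ∧ paletteIndex G = r + 1 := by
  classical
  set f := Fintype.equivFin (Vtx r) with hf
  refine ⟨Fintype.card (Vtx r), (Gr r).comap (f.symm : Fin _ → Vtx r), ?_, ?_⟩
  · intro v
    have hns : ((Gr r).comap (f.symm : Fin _ → Vtx r)).neighborSet v
        = (f.symm : Fin _ → Vtx r) ⁻¹' ((Gr r).neighborSet (f.symm v)) := by
      ext y
      simp [SimpleGraph.comap, SimpleGraph.neighborSet]
    rw [hns, ← Equiv.image_eq_preimage_symm,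
      Set.ncard_image_of_injective _ f.injective]
    exact Gr_regular r hr hodd (f.symm v)
  · rw [paletteIndex_comap f (Gr r)]
    have hcolval : numPalettes (Gr r) (col r) = r + 1 := by
      have h1 := numPalettes_col_le r hr hodd
      have h2 := lower_bound r hr hodd (col r) (col_proper r hr)
      omega
    apply le_antisymm
    · apply Nat.sInf_le
      exact ⟨col r, col_proper r hr, hcolval⟩
    · refine le_csInf ⟨r + 1, col r, col_proper r hr, hcolval⟩ ?_
      rintro n ⟨c, hc, rfl⟩
      exact lower_bound r hr hodd c hc
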